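/- arXiv:1205.7030 — 5 statements merged into one kernel-verified Lean document; each statement's English description precedes it below -/
import Mathlib

section
/- Let r > 0, v_max > 0, t_S > 0 be real constants and suppose 0 < D₀ < (v_max/r)·(1 − exp(−r·t_S)). Define D : ℝ → ℝ by D(t) = D₀·exp(r·t) + (v_max/r)·(1 − exp(r·t)) and set t_D := (1/r)·ln(v_max/(v_max − r·D₀)). Then 0 < t_D < t_S and D(t_D) = 0. -/
theorem stmt_5 (r vmax tS D₀ : ℝ) (hr : 0 < r) (hv : 0 < vmax) (htS : 0 < tS)
    (hD₀ : 0 < D₀) (hD₀' : D₀ < (vmax / r) * (1 - Real.exp (-r * tS)))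
    (D : ℝ → ℝ)
    (hD : ∀ t, D t = D₀ * Real.exp (r * t) + (vmax / r) * (1 - Real.exp (r * t))) :
    0 < (1 / r) * Real.log (vmax / (vmax - r * D₀)) ∧
    (1 / r) * Real.log (vmax / (vmax - r * D₀)) < tS ∧
    D ((1 / r) * Real.log (vmax / (vmax - r * D₀))) = 0 := by
  have hE : Real.exp (-r * tS) = (Real.exp (r * tS))⁻¹ := by
    rw [← Real.exp_neg]; ring_nf
  have hEpos : 0 < Real.exp (r * tS) := Real.exp_pos _
  have hEgt : 1 < Real.exp (r * tS) := by
    apply Real.one_lt_exp_iff.mpr (by positivity) <;> positivity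
  have hkey : r * D₀ < vmax * (1 - (Real.exp (r * tS))⁻¹) := by
    have h1 := mul_lt_mul_of_pos_left hD₀' hr
    rw [hE] at h1
    have h2 : r * (vmax / r) = vmax := by field_simp
    rw [← mul_assoc, h2] at h1; exact h1
  have hinv : (Real.exp (r * tS))⁻¹ * Real.exp (r * tS) = 1 :=
    inv_mul_cancel₀ (ne_of_gt hEpos)
  have hsub : 0 < vmax - r * D₀ := by nlinarith [inv_pos.mpr hEpos]
  have hratio : 1 < vmax / (vmax - r * D₀) := by
    rw [lt_div_iff₀ hsub]; nlinarith
  have hlogpos : 0 < Real.log (vmax / (vmax - r * D₀)) := Real.log_pos hratio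
  have hexp : Real.exp (r * ((1 / r) * Real.log (vmax / (vmax - r * D₀)))) =
      vmax / (vmax - r * D₀) := by
    rw [show r * ((1 / r) * Real.log (vmax / (vmax - r * D₀))) =
        Real.log (vmax / (vmax - r * D₀)) by field_simp]
    exact Real.exp_log (by positivity)
  refine ⟨by positivity, ?_, ?_⟩
  · rw [show tS = (1 / r) * (r * tS) by field_simp]
    apply mul_lt_mul_of_pos_left ?_ (by positivity)
    rw [Real.log_lt_iff_lt_exp (by positivity), div_lt_iff₀ hsub]
    nlinarith
  · rw [hD, hexp]
    field_simp [hsub.ne', show vmax - D₀ * r ≠ 0 by nlinarith]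
    ring
end

section
/- Let r, v_max, A, w_max, t_S be positive real constants and let D₀ satisfy D₀ > (v_max/r)·(1 − exp(−r·t_S)), v_max > A·w_max, and v_max − r·D₀ − A·w_max·exp(−r·t_S) > 0. Define D : ℝ → ℝ piecewise by D(t) = D₀·exp(r·t) + (v_max/r)·(1 − exp(r·t)) for t ≤ t_S, and D(t) = (D₀ + (A·w_max·exp(−r·t_S) − v_max)/r)·exp(r·t) + (v_max − A·w_max)/r for t ≥ t_S. Then D is continuous at t_S, D′(t) = r·D(t) − v_max for all t < t_S, D′(t) = r·D(t) + A·w_max − v_max for all t > t_S, and t_D := (1/r)·ln((v_max − A·w_max)/(v_max − r·D₀ − A·w_max·exp(−r·t_S))) satisfies t_D > t_S and D(t_D) = 0. -/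
theorem stmt_6 (r vmax A wmax tS D₀ : ℝ)
    (hr : 0 < r) (hv : 0 < vmax) (hA : 0 < A) (hw : 0 < wmax) (htS : 0 < tS)
    (hD₀ : (vmax / r) * (1 - Real.exp (-r * tS)) < D₀)
    (h1 : A * wmax < vmax)
    (h2 : 0 < vmax - r * D₀ - A * wmax * Real.exp (-r * tS))
    (D : ℝ → ℝ)
    (hD1 : ∀ t ≤ tS,
      D t = D₀ * Real.exp (r * t) + (vmax / r) * (1 - Real.exp (r * t)))
    (hD2 : ∀ t ≥ tS,
      D t = (D₀ + (A * wmax * Real.exp (-r * tS) - vmax) / r) * Real.exp (r * t)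
            + (vmax - A * wmax) / r) :
    ContinuousAt D tS ∧
    (∀ t < tS, HasDerivAt D (r * D t - vmax) t) ∧
    (∀ t > tS, HasDerivAt D (r * D t + A * wmax - vmax) t) ∧
    tS < (1 / r) * Real.log ((vmax - A * wmax) / (vmax - r * D₀ - A * wmax * Real.exp (-r * tS))) ∧
    D ((1 / r) * Real.log ((vmax - A * wmax) / (vmax - r * D₀ - A * wmax * Real.exp (-r * tS)))) = 0 := by
  have hrne : r ≠ 0 := ne_of_gt hr
  have hnum : 0 < vmax - A * wmax := by linarith
  set K := (vmax - A * wmax) / (vmax - r * D₀ - A * wmax * Real.exp (-r * tS)) with hKdef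
  have hKpos : 0 < K := div_pos hnum h2
  have hexp : ∀ t : ℝ, HasDerivAt (fun t => Real.exp (r * t)) (r * Real.exp (r * t)) t := by
    intro t
    have h := (Real.hasDerivAt_exp (r * t)).comp t ((hasDerivAt_id t).const_mul r)
    exact h.congr_deriv (by ring)
  -- the two pieces
  set F1 : ℝ → ℝ := fun t => D₀ * Real.exp (r * t) + (vmax / r) * (1 - Real.exp (r * t)) with hF1
  set F2 : ℝ → ℝ := fun t =>
    (D₀ + (A * wmax * Real.exp (-r * tS) - vmax) / r) * Real.exp (r * t)
      + (vmax - A * wmax) / r with hF2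
  have hcont : ContinuousAt D tS := by
    rw [continuousAt_iff_continuous_left_right]
    constructor
    · have hc : ContinuousWithinAt F1 (Set.Iic tS) tS :=
        (Continuous.continuousWithinAt (by fun_prop))
      exact hc.congr (fun y hy => hD1 y hy) (hD1 tS le_rfl)
    · have hc : ContinuousWithinAt F2 (Set.Ici tS) tS :=
        (Continuous.continuousWithinAt (by fun_prop))
      exact hc.congr (fun y hy => hD2 y hy) (hD2 tS le_rfl)
  refine ⟨hcont, ?_, ?_, ?_, ?_⟩
  · intro t ht
    have hF1d : HasDerivAt F1 (D₀ * (r * Real.exp (r * t)) + (vmax / r) * (0 - r * Real.exp (r * t))) t :=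
      ((hexp t).const_mul D₀).add (((hasDerivAt_const t (1:ℝ)).sub (hexp t)).const_mul (vmax / r))
    have heq : D =ᶠ[nhds t] F1 :=
      Filter.eventuallyEq_of_mem (Iio_mem_nhds ht) (fun x hx => hD1 x (le_of_lt hx))
    have := hF1d.congr_of_eventuallyEq heq
    refine this.congr_deriv ?_
    rw [hD1 t (le_of_lt ht)]
    field_simp
    ring
  · intro t ht
    have hF2d : HasDerivAt F2
        ((D₀ + (A * wmax * Real.exp (-r * tS) - vmax) / r) * (r * Real.exp (r * t)) + 0) t :=
      ((hexp t).const_mul _).add (hasDerivAt_const t _)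
    have heq : D =ᶠ[nhds t] F2 :=
      Filter.eventuallyEq_of_mem (Ioi_mem_nhds ht) (fun x hx => hD2 x (le_of_lt hx))
    have := hF2d.congr_of_eventuallyEq heq
    refine this.congr_deriv ?_
    rw [hD2 t (le_of_lt ht)]
    field_simp
    ring
  · -- tS < (1/r) * log K
    have hlt : Real.exp (r * tS) < K := by
      rw [hKdef, lt_div_iff₀ h2]
      have he : Real.exp (-r * tS) * Real.exp (r * tS) = 1 := by
        rw [← Real.exp_add]; ring_nf; exact Real.exp_zero
      have hD₀' : vmax / r * (1 - Real.exp (-r * tS)) < D₀ := hD₀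
      rw [div_mul_eq_mul_div, div_lt_iff₀ hr] at hD₀'
      have hkey : vmax * (1 - Real.exp (-r * tS)) < r * D₀ := by nlinarith
      nlinarith [Real.exp_pos (r * tS), Real.exp_pos (-r * tS), he]
    have := Real.log_lt_log (Real.exp_pos _) hlt
    rw [Real.log_exp] at this
    calc tS = (1 / r) * (r * tS) := by field_simp
      _ < (1 / r) * Real.log K := by
          apply mul_lt_mul_of_pos_left this
          positivity
  · -- D at t_D = 0
    have hge : tS ≤ (1 / r) * Real.log K := by
      have hlt : Real.exp (r * tS) < K := by
        rw [hKdef, lt_div_iff₀ h2]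
        have he : Real.exp (-r * tS) * Real.exp (r * tS) = 1 := by
          rw [← Real.exp_add]; ring_nf; exact Real.exp_zero
        have hD₀' : vmax / r * (1 - Real.exp (-r * tS)) < D₀ := hD₀
        rw [div_mul_eq_mul_div, div_lt_iff₀ hr] at hD₀'
        have hkey : vmax * (1 - Real.exp (-r * tS)) < r * D₀ := by nlinarith
        nlinarith [Real.exp_pos (r * tS), Real.exp_pos (-r * tS), he]
      have := Real.log_lt_log (Real.exp_pos _) hlt
      rw [Real.log_exp] at this
      have : tS = (1 / r) * (r * tS) := by field_simp
      nlinarith [mul_lt_mul_of_pos_left (Real.log_lt_log (Real.exp_pos _) hlt) (by positivity : (0:ℝ) < 1/r), Real.log_exp (r * tS)]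
    rw [hD2 _ hge]
    have hexpK : Real.exp (r * ((1 / r) * Real.log K)) = K := by
      rw [show r * ((1 / r) * Real.log K) = Real.log K by field_simp]
      exact Real.exp_log hKpos
    have hd : vmax - r * D₀ - A * wmax * Real.exp (-r * tS) ≠ 0 := ne_of_gt h2
    have hC : D₀ + (A * wmax * Real.exp (-r * tS) - vmax) / r
        = -(vmax - r * D₀ - A * wmax * Real.exp (-r * tS)) / r := by
      field_simp; ring
    have hstep : -(vmax - r * D₀ - A * wmax * Real.exp (-r * tS)) / r *
        ((vmax - A * wmax) / (vmax - r * D₀ - A * wmax * Real.exp (-r * tS)))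
        = -((vmax - A * wmax) / r) := by
      rw [neg_div, neg_mul, div_mul_div_comm,
        mul_comm r (vmax - r * D₀ - A * wmax * Real.exp (-r * tS)),
        mul_div_mul_left _ _ hd]
    rw [hexpK, hC, hKdef, hstep]
    ring
end

section
/- Let r > 0, t_S > 0, and let p, w_max, B, N₀, D₀ be real constants with p·w_max > B and D₀ − N₀ = ((p·w_max − B)/r)·(1 − exp(−r·t_S)). Define D : ℝ → ℝ by D(t) = (D₀ − N₀)·exp(r·t) + ((p·w_max − B)/r)·(1 − exp(r·t)). Then D(0) = D₀ − N₀, D′(t) = r·D(t) − (p·w_max − B) for every t ∈ ℝ, D(t_S) = 0, and D(t) > 0 for all t ∈ [0, t_S). (Hence t_D = t_S.) -/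
theorem stmt_15 (r tS p wmax B N₀ D₀ : ℝ) (hr : 0 < r) (htS : 0 < tS)
    (hpB : B < p * wmax)
    (hD₀ : D₀ - N₀ = ((p * wmax - B) / r) * (1 - Real.exp (-r * tS)))
    (D : ℝ → ℝ)
    (hD : ∀ t, D t = (D₀ - N₀) * Real.exp (r * t)
          + ((p * wmax - B) / r) * (1 - Real.exp (r * t))) :
    D 0 = D₀ - N₀ ∧
    (∀ t : ℝ, HasDerivAt D (r * D t - (p * wmax - B)) t) ∧
    D tS = 0 ∧
    (∀ t ∈ Set.Ico (0:ℝ) tS, 0 < D t) := by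
  have hC : 0 < (p * wmax - B) / r := div_pos (by linarith) hr
  have hD' : ∀ t, D t = ((p * wmax - B) / r) * (1 - Real.exp (r * (t - tS))) := by
    intro t
    have hmul : Real.exp (r * (t - tS)) = Real.exp (-r * tS) * Real.exp (r * t) := by
      rw [← Real.exp_add]; ring_nf
    rw [hD t, hD₀, hmul]; ring
  refine ⟨?_, ?_, ?_, ?_⟩
  · rw [hD 0]; simp
  · intro t
    have h1 : HasDerivAt (fun t => (D₀ - N₀) * Real.exp (r * t)
        + ((p * wmax - B) / r) * (1 - Real.exp (r * t)))
        ((D₀ - N₀) * (Real.exp (r * t) * r)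
          + ((p * wmax - B) / r) * (-(Real.exp (r * t) * r))) t := by
      have he : HasDerivAt (fun t : ℝ => Real.exp (r * t)) (Real.exp (r * t) * r) t := by
        exact ((Real.hasDerivAt_exp (r * t)).comp t ((hasDerivAt_id t).const_mul r)).congr_deriv (by simp)
      exact ((he.const_mul _).add ((he.const_sub 1).const_mul _))
    have h2 : HasDerivAt D ((D₀ - N₀) * (Real.exp (r * t) * r)
          + ((p * wmax - B) / r) * (-(Real.exp (r * t) * r))) t := by
      have : D = fun t => (D₀ - N₀) * Real.exp (r * t)
        + ((p * wmax - B) / r) * (1 - Real.exp (r * t)) := funext hD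
      rw [this]; exact h1
    convert h2 using 1
    rw [hD t]
    field_simp
    ring
  · rw [hD' tS]; simp
  · intro t ht
    rw [hD' t]
    have : Real.exp (r * (t - tS)) < 1 := by
      rw [Real.exp_lt_one_iff]
      exact mul_neg_of_pos_of_neg hr (by linarith [ht.2])
    nlinarith
end

section
/- Let r > 0, t_S > 0, and let p, w_max, B, N₀, D₀ be real constants with 0 < D₀ − N₀ < ((p·w_max − B)/r)·(1 − exp(−r·t_S)). Define D : ℝ → ℝ by D(t) = (D₀ − N₀)·exp(r·t) + ((p·w_max − B)/r)·(1 − exp(r·t)) and set t_D := (1/r)·ln((p·w_max − B)/(p·w_max − B − r·(D₀ − N₀))). Then 0 < t_D < t_S and D(t_D) = 0. -/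
theorem stmt_16 (r tS p wmax B N₀ D₀ : ℝ) (hr : 0 < r) (htS : 0 < tS)
    (h1 : 0 < D₀ - N₀)
    (h2 : D₀ - N₀ < ((p * wmax - B) / r) * (1 - Real.exp (-r * tS)))
    (D : ℝ → ℝ)
    (hD : ∀ t, D t = (D₀ - N₀) * Real.exp (r * t)
          + ((p * wmax - B) / r) * (1 - Real.exp (r * t))) :
    0 < (1 / r) * Real.log ((p * wmax - B) / (p * wmax - B - r * (D₀ - N₀))) ∧
    (1 / r) * Real.log ((p * wmax - B) / (p * wmax - B - r * (D₀ - N₀))) < tS ∧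
    D ((1 / r) * Real.log ((p * wmax - B) / (p * wmax - B - r * (D₀ - N₀)))) = 0 := by
  set A := p * wmax - B with hAdef
  set Δ := D₀ - N₀ with hΔdef
  have hexp : Real.exp (-r * tS) < 1 := by
    rw [Real.exp_lt_one_iff]
    nlinarith
  have hexp0 : 0 < Real.exp (-r * tS) := Real.exp_pos _
  have hfac : 0 < 1 - Real.exp (-r * tS) := by linarith
  have hfac1 : 1 - Real.exp (-r * tS) < 1 := by linarith
  have hAr : 0 < A / r := by
    by_contra h; push_neg at h
    nlinarith [h1.trans h2]
  have hA : 0 < A := by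
    have := mul_pos hAr hr
    rwa [div_mul_cancel₀ _ hr.ne'] at this
  have hden : 0 < A - r * Δ := by
    have h3 : Δ < A / r := by
      calc Δ < (A / r) * (1 - Real.exp (-r * tS)) := h2
        _ < A / r * 1 := by
          apply mul_lt_mul_of_pos_left hfac1 (div_pos hA hr)
        _ = A / r := mul_one _
    have h4 : Δ * r < A := (lt_div_iff₀ hr).mp h3
    nlinarith
  have hratio : 1 < A / (A - r * Δ) := by
    rw [lt_div_iff₀ hden]
    nlinarith
  have hlogpos : 0 < Real.log (A / (A - r * Δ)) := Real.log_pos hratio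
  have hratio_pos : 0 < A / (A - r * Δ) := by linarith
  refine ⟨by positivity, ?_, ?_⟩
  · -- t_D < tS
    have hkey : A / (A - r * Δ) < Real.exp (r * tS) := by
      rw [div_lt_iff₀ hden]
      have h4 : r * Δ < A * (1 - Real.exp (-r * tS)) := by
        have := (mul_lt_mul_of_pos_left h2 hr)
        calc r * Δ < r * ((A / r) * (1 - Real.exp (-r * tS))) := this
          _ = A * (1 - Real.exp (-r * tS)) := by field_simp
      have h5 : A * Real.exp (-r * tS) < A - r * Δ := by nlinarith
      have h6 : Real.exp (-r * tS) * Real.exp (r * tS) = 1 := by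
        rw [← Real.exp_add]; ring_nf; exact Real.exp_zero
      nlinarith [mul_lt_mul_of_pos_right h5 (Real.exp_pos (r * tS))]
    have := Real.log_lt_log hratio_pos hkey
    rw [Real.log_exp] at this
    calc (1 / r) * Real.log (A / (A - r * Δ)) < (1 / r) * (r * tS) := by
          apply mul_lt_mul_of_pos_left this (by positivity)
      _ = tS := by field_simp
  · rw [hD]
    have hrt : r * ((1 / r) * Real.log (A / (A - r * Δ))) = Real.log (A / (A - r * Δ)) := by
      field_simp
    rw [hrt, Real.exp_log hratio_pos]
    have hne : A - Δ * r ≠ 0 := by rw [mul_comm]; exact hden.ne'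
    field_simp
    ring
end

section
/- Let r, A, K, w_max, t_S be positive real constants and let p, B, N₀, D₀ be real constants satisfying (p − A − K)·w_max − B > 0, D₀ − N₀ > ((p·w_max − B)/r)·(1 − exp(−r·t_S)), and p·w_max − B − r·(D₀ − N₀) − (A + K)·w_max·exp(−r·t_S) > 0. Define D : ℝ → ℝ piecewise by D(t) = (D₀ − N₀)·exp(r·t) + ((p·w_max − B)/r)·(1 − exp(r·t)) for t ≤ t_S, and D(t) = (D₀ − N₀)·exp(r·t) + ((p·w_max − B)/r)·(1 − exp(r·t)) + ((A + K)·w_max/r)·(exp(r·(t − t_S)) − 1) for t ≥ t_S. Then D is continuous at t_S, D′(t) = r·D(t) − (p·w_max − B) for all t < t_S, D′(t) = r·D(t) + (A + K)·w_max − (p·w_max − B) for all t > t_S, and t_D := (1/r)·ln(((p − A − K)·w_max − B)/(p·w_max − B − r·(D₀ − N₀) − (A + K)·w_max·exp(−r·t_S))) satisfies t_D > t_S and D(t_D) = 0. -/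
set_option maxHeartbeats 1000000 in
theorem stmt_17 (r A K wmax tS p B N₀ D₀ : ℝ)
    (hr : 0 < r) (hA : 0 < A) (hK : 0 < K) (hw : 0 < wmax) (htS : 0 < tS)
    (hprof : 0 < (p - A - K) * wmax - B)
    (hbig : ((p * wmax - B) / r) * (1 - Real.exp (-r * tS)) < D₀ - N₀)
    (hpos : 0 < p * wmax - B - r * (D₀ - N₀) - (A + K) * wmax * Real.exp (-r * tS))
    (D : ℝ → ℝ)
    (hD1 : ∀ t ≤ tS,
      D t = (D₀ - N₀) * Real.exp (r * t)
            + ((p * wmax - B) / r) * (1 - Real.exp (r * t)))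
    (hD2 : ∀ t ≥ tS,
      D t = (D₀ - N₀) * Real.exp (r * t)
            + ((p * wmax - B) / r) * (1 - Real.exp (r * t))
            + ((A + K) * wmax / r) * (Real.exp (r * (t - tS)) - 1)) :
    ContinuousAt D tS ∧
    (∀ t < tS, HasDerivAt D (r * D t - (p * wmax - B)) t) ∧
    (∀ t > tS, HasDerivAt D (r * D t + (A + K) * wmax - (p * wmax - B)) t) ∧
    tS < (1 / r) * Real.log (((p - A - K) * wmax - B) /
        (p * wmax - B - r * (D₀ - N₀) - (A + K) * wmax * Real.exp (-r * tS))) ∧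
    D ((1 / r) * Real.log (((p - A - K) * wmax - B) /
        (p * wmax - B - r * (D₀ - N₀) - (A + K) * wmax * Real.exp (-r * tS)))) = 0 := by
  have hrne : r ≠ 0 := hr.ne'
  set C : ℝ := (p * wmax - B) / r with hC
  set M : ℝ := (A + K) * wmax / r with hM
  set F : ℝ → ℝ := fun t => (D₀ - N₀) * Real.exp (r * t) + C * (1 - Real.exp (r * t)) with hF
  set G : ℝ → ℝ := fun t => F t + M * (Real.exp (r * (t - tS)) - 1) with hG
  have hexp : ∀ t : ℝ, HasDerivAt (fun t => Real.exp (r * t)) (r * Real.exp (r * t)) t := by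
    intro t
    have h1 : HasDerivAt (fun x : ℝ => r * x) r t := by
      simpa using (hasDerivAt_id t).const_mul r
    exact ((Real.hasDerivAt_exp (r * t)).comp t h1).congr_deriv (by ring)
  have hexp2 : ∀ t : ℝ, HasDerivAt (fun t => Real.exp (r * (t - tS)))
      (r * Real.exp (r * (t - tS))) t := by
    intro t
    have h1 : HasDerivAt (fun x : ℝ => r * (x - tS)) r t := by
      simpa using ((hasDerivAt_id t).sub_const tS).const_mul r
    exact ((Real.hasDerivAt_exp (r * (t - tS))).comp t h1).congr_deriv (mul_comm _ _)
  have hFd : ∀ t : ℝ, HasDerivAt F (r * F t - (p * wmax - B)) t := by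
    intro t
    have h := (((hexp t).const_mul (D₀ - N₀))).add
      (((hasDerivAt_const t (1:ℝ)).sub (hexp t)).const_mul C)
    refine h.congr_deriv ?_
    simp only [hF, hC]
    field_simp
    ring
  have hGd : ∀ t : ℝ, HasDerivAt G (r * G t + (A + K) * wmax - (p * wmax - B)) t := by
    intro t
    have h := (hFd t).add (((hexp2 t).sub_const 1).const_mul M)
    refine h.congr_deriv ?_
    simp only [hG, hM]
    field_simp
    ring
  constructor
  · rw [continuousAt_iff_continuous_left_right]
    constructor
    · refine ((hFd tS).continuousAt.continuousWithinAt).congr (fun s hs => ?_) ?_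
      · exact hD1 s hs
      · exact hD1 tS le_rfl
    · refine ((hGd tS).continuousAt.continuousWithinAt).congr (fun s hs => ?_) ?_
      · simpa [hG, hF, hC, hM] using hD2 s hs
      · simpa [hG, hF, hC, hM] using hD2 tS le_rfl
  refine ⟨?_, ?_, ?_, ?_⟩
  · intro t ht
    have hev : D =ᶠ[nhds t] F :=
      Filter.eventuallyEq_of_mem (Iio_mem_nhds ht) (fun s hs => hD1 s (le_of_lt hs))
    have : D t = F t := hD1 t ht.le
    rw [this]
    exact (hev.hasDerivAt_iff).mpr (hFd t)
  · intro t ht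
    have hev : D =ᶠ[nhds t] G := by
      refine Filter.eventuallyEq_of_mem (Ioi_mem_nhds ht) (fun s hs => ?_)
      simpa [hG, hF, hC, hM] using hD2 s (le_of_lt hs)
    have hDG : D t = G t := by simpa [hG, hF, hC, hM] using hD2 t ht.le
    rw [hDG]
    exact (hev.hasDerivAt_iff).mpr (hGd t)
  all_goals {
    set P : ℝ := (p - A - K) * wmax - B with hP
    set Q : ℝ := p * wmax - B - r * (D₀ - N₀) - (A + K) * wmax * Real.exp (-r * tS) with hQ
    have hQpos : 0 < Q := hpos
    have he2 : Real.exp (-r * tS) > 0 := Real.exp_pos _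
    have he1 : Real.exp (r * tS) > 0 := Real.exp_pos _
    have hmul : Real.exp (r * tS) * Real.exp (-r * tS) = 1 := by
      rw [← Real.exp_add]; ring_nf; exact Real.exp_zero
    have hbig' : (p * wmax - B) * (1 - Real.exp (-r * tS)) < r * (D₀ - N₀) := by
      have := (mul_lt_mul_iff_right₀ hr).mpr hbig
      calc (p * wmax - B) * (1 - Real.exp (-r * tS))
          = r * ((p * wmax - B) / r * (1 - Real.exp (-r * tS))) := by field_simp
        _ < r * (D₀ - N₀) := this
    have hQP : Q * Real.exp (r * tS) < P := by
      simp only [hQ, hP]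
      nlinarith [mul_lt_mul_of_pos_right hbig' he1]
    have hPQpos : 0 < P / Q := div_pos hprof hQpos
    have hlt : tS < (1 / r) * Real.log (P / Q) := by
      have h1 : Real.exp (r * tS) < P / Q := (lt_div_iff₀ hQpos).mpr (by linarith [hQP])
      have h2 : r * tS < Real.log (P / Q) := (Real.lt_log_iff_exp_lt hPQpos).mpr h1
      calc tS = (1 / r) * (r * tS) := by field_simp
        _ < (1 / r) * Real.log (P / Q) := by
            exact (mul_lt_mul_iff_right₀ (by positivity)).mpr h2
    first
    | exact hlt
    | {
      set tD : ℝ := (1 / r) * Real.log (P / Q) with htD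
      have hetD : Real.exp (r * tD) = P / Q := by
        rw [htD]
        rw [show r * (1 / r * Real.log (P / Q)) = Real.log (P / Q) by field_simp]
        exact Real.exp_log hPQpos
      have hetD2 : Real.exp (r * (tD - tS)) = (P / Q) * Real.exp (-r * tS) := by
        rw [show r * (tD - tS) = r * tD + (-r * tS) by ring, Real.exp_add, hetD]
      have hQne : Q ≠ 0 := hQpos.ne'
      rw [hD2 tD hlt.le, hetD, hetD2]
      clear_value C M F G P Q tD
      rw [hC, hM]
      field_simp
      rw [hP, hQ]
      ring
    }
  }
end
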